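/- For any f : T → X, the limit of V_ε(f,T) as ε → 0⁺ equals sup_{ε>0} V_ε(f,T), which equals the Jordan variation V(f,T) (as elements of [0,∞]). -/

import Mathlib

open Filter Set

noncomputable def jordanVar {X : Type*} [PseudoMetricSpace X] (f : ℝ → X) (S : Set ℝ) : ENNReal :=
  ⨆ (n : ℕ) (t : Fin (n+1) → ℝ) (_ : Monotone t) (_ : ∀ i, t i ∈ S),
    ∑ i : Fin n, edist (f (t i.succ)) (f (t i.castSucc))

noncomputable def appVar {X : Type*} [PseudoMetricSpace X] (ε : ℝ) (f : ℝ → X) (S : Set ℝ) : ENNReal :=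
  ⨅ (g : ℝ → X) (_ : jordanVar g S < ⊤) (_ : ∀ t ∈ S, dist (f t) (g t) ≤ ε), jordanVar g S

lemma sum_le_jordanVar {X : Type*} [PseudoMetricSpace X] (g : ℝ → X) (S : Set ℝ)
    (n : ℕ) (t : Fin (n+1) → ℝ) (ht : Monotone t) (hmem : ∀ i, t i ∈ S) :
    ∑ i : Fin n, edist (g (t i.succ)) (g (t i.castSucc)) ≤ jordanVar g S := by
  refine le_iSup_of_le n (le_iSup_of_le t (le_iSup_of_le ht (le_iSup_of_le hmem le_rfl)))

lemma appVar_antitone {X : Type*} [PseudoMetricSpace X] (f : ℝ → X) (S : Set ℝ)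
    {ε₁ ε₂ : ℝ} (h : ε₁ ≤ ε₂) : appVar ε₂ f S ≤ appVar ε₁ f S := by
  refine le_iInf fun g => le_iInf fun hg => le_iInf fun hd => ?_
  exact iInf_le_of_le g (iInf_le_of_le hg (iInf_le_of_le
    (fun s hs => (hd s hs).trans h) le_rfl))

lemma appVar_le_jordanVar {X : Type*} [PseudoMetricSpace X] (f : ℝ → X) (S : Set ℝ)
    {ε : ℝ} (hε : 0 ≤ ε) : appVar ε f S ≤ jordanVar f S := by
  rcases eq_or_ne (jordanVar f S) ⊤ with h | h
  · simp [h]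
  · exact iInf_le_of_le f (iInf_le_of_le h.lt_top (iInf_le_of_le
      (fun s _ => by simpa using hε) le_rfl))

lemma sum_le_appVar_add {X : Type*} [PseudoMetricSpace X] (f : ℝ → X) (S : Set ℝ)
    {ε : ℝ} (n : ℕ) (t : Fin (n+1) → ℝ) (ht : Monotone t) (hmem : ∀ i, t i ∈ S) :
    ∑ i : Fin n, edist (f (t i.succ)) (f (t i.castSucc))
      ≤ appVar ε f S + n * (2 * ENNReal.ofReal ε) := by
  set c : ENNReal := (n : ENNReal) * (2 * ENNReal.ofReal ε) with hc
  have hcne : c ≠ ⊤ := by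
    simp [hc, ENNReal.mul_ne_top, ENNReal.ofReal_ne_top]
  have key : ∀ g : ℝ → X, (∀ s ∈ S, dist (f s) (g s) ≤ ε) →
      ∑ i : Fin n, edist (f (t i.succ)) (f (t i.castSucc)) ≤ jordanVar g S + c := by
    intro g hd
    have hterm : ∀ i : Fin n, edist (f (t i.succ)) (f (t i.castSucc))
        ≤ edist (g (t i.succ)) (g (t i.castSucc)) + 2 * ENNReal.ofReal ε := by
      intro i
      have h1 : edist (f (t i.succ)) (g (t i.succ)) ≤ ENNReal.ofReal ε := by
        rw [edist_dist]; exact ENNReal.ofReal_le_ofReal (hd _ (hmem _))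
      have h2 : edist (g (t i.castSucc)) (f (t i.castSucc)) ≤ ENNReal.ofReal ε := by
        rw [edist_comm, edist_dist]; exact ENNReal.ofReal_le_ofReal (hd _ (hmem _))
      calc edist (f (t i.succ)) (f (t i.castSucc))
          ≤ edist (f (t i.succ)) (g (t i.succ)) + edist (g (t i.succ)) (g (t i.castSucc))
            + edist (g (t i.castSucc)) (f (t i.castSucc)) := edist_triangle4 _ _ _ _
        _ ≤ ENNReal.ofReal ε + edist (g (t i.succ)) (g (t i.castSucc)) + ENNReal.ofReal ε := by
            gcongr
        _ = edist (g (t i.succ)) (g (t i.castSucc)) + 2 * ENNReal.ofReal ε := by ring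
    calc ∑ i : Fin n, edist (f (t i.succ)) (f (t i.castSucc))
        ≤ ∑ i : Fin n, (edist (g (t i.succ)) (g (t i.castSucc)) + 2 * ENNReal.ofReal ε) :=
          Finset.sum_le_sum fun i _ => hterm i
      _ = (∑ i : Fin n, edist (g (t i.succ)) (g (t i.castSucc))) + c := by
          rw [Finset.sum_add_distrib, Finset.sum_const, Finset.card_univ, Fintype.card_fin,
            hc, nsmul_eq_mul]
      _ ≤ jordanVar g S + c := by gcongr; exact sum_le_jordanVar g S n t ht hmem
  have hsub : ∑ i : Fin n, edist (f (t i.succ)) (f (t i.castSucc)) - c ≤ appVar ε f S := by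
    refine le_iInf fun g => le_iInf fun _ => le_iInf fun hd => ?_
    exact tsub_le_iff_right.2 (key g hd)
  calc ∑ i : Fin n, edist (f (t i.succ)) (f (t i.castSucc))
      ≤ (∑ i : Fin n, edist (f (t i.succ)) (f (t i.castSucc)) - c) + c := le_tsub_add
    _ ≤ appVar ε f S + c := by gcongr

lemma jordanVar_le_sup {X : Type*} [PseudoMetricSpace X] (f : ℝ → X) (S : Set ℝ) :
    jordanVar f S ≤ ⨆ ε ∈ Set.Ioi (0 : ℝ), appVar ε f S := by
  set L := ⨆ ε ∈ Set.Ioi (0 : ℝ), appVar ε f S with hL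
  refine iSup_le fun n => iSup_le fun t => iSup_le fun ht => iSup_le fun hmem => ?_
  refine ENNReal.le_of_forall_pos_le_add fun δ hδ hLt => ?_
  set ε : ℝ := (δ : ℝ) / (2 * (n + 1)) with hε
  have hεpos : 0 < ε := by positivity
  have h1 : ∑ i : Fin n, edist (f (t i.succ)) (f (t i.castSucc))
      ≤ appVar ε f S + n * (2 * ENNReal.ofReal ε) := sum_le_appVar_add f S n t ht hmem
  have h2 : appVar ε f S ≤ L := le_iSup₂ (f := fun ε _ => appVar ε f S) ε hεpos
  have h3 : (n : ENNReal) * (2 * ENNReal.ofReal ε) ≤ (δ : ENNReal) := by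
    rw [← ENNReal.ofReal_natCast, ← ENNReal.ofReal_ofNat, ← ENNReal.ofReal_mul (by positivity),
      ← ENNReal.ofReal_mul (by positivity)]
    rw [← ENNReal.ofReal_coe_nnreal (p := δ)]
    apply ENNReal.ofReal_le_ofReal
    rw [hε]
    rw [div_eq_mul_inv]
    have hne : (2 * ((n : ℝ) + 1)) ≠ 0 := by positivity
    calc (n : ℝ) * (2 * ((δ : ℝ) * (2 * ((n : ℝ) + 1))⁻¹))
        = (δ : ℝ) * ((n : ℝ) * 2 / (2 * ((n : ℝ) + 1))) := by ring
      _ ≤ (δ : ℝ) * 1 := by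
          gcongr
          rw [div_le_one (by positivity)]
          nlinarith [Nat.cast_nonneg (α := ℝ) n]
      _ = (δ : ℝ) := mul_one _
  calc ∑ i : Fin n, edist (f (t i.succ)) (f (t i.castSucc))
      ≤ appVar ε f S + n * (2 * ENNReal.ofReal ε) := h1
    _ ≤ L + δ := add_le_add h2 h3

theorem stmt8 {X : Type*} [PseudoMetricSpace X] (T : Set ℝ) (hT : T.Nonempty)
    (f : ℝ → X) :
    Filter.Tendsto (fun ε => appVar ε f T) (nhdsWithin 0 (Set.Ioi 0))
      (nhds (jordanVar f T)) ∧
    (⨆ ε ∈ Set.Ioi (0 : ℝ), appVar ε f T) = jordanVar f T := by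
  have hsup : (⨆ ε ∈ Set.Ioi (0 : ℝ), appVar ε f T) = jordanVar f T := by
    refine le_antisymm ?_ (jordanVar_le_sup f T)
    exact iSup₂_le fun ε hε => appVar_le_jordanVar f T (le_of_lt hε)
  refine ⟨?_, hsup⟩
  have hanti : AntitoneOn (fun ε => appVar ε f T) (Set.Ioi (0 : ℝ)) :=
    fun a _ b _ hab => appVar_antitone f T hab
  have := hanti.tendsto_nhdsGT (OrderTop.bddAbove _)
  rwa [sSup_image, hsup] at this
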